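/- Let a, b > 0, n ≥ 1 an integer, and θ real with sin(nθ) ≠ 0. If sin²(θ/2) = b/((a+b)(a+1)) and cos²(θ/2)/sin²(nθ) = a(1+b)/(a+b), then tan²(nθ) = (1+a+b)/(ab) and tan²(θ/2) = b/(a(1+a+b)). -/

import Mathlib

theorem boundary_conditions_combined (a b : ℝ) (ha : 0 < a) (hb : 0 < b)
    (n : ℕ) (hn : 1 ≤ n) (θ : ℝ) (hsin : Real.sin (n * θ) ≠ 0)
    (h1 : Real.sin (θ/2)^2 = b / ((a + b) * (a + 1)))
    (h2 : Real.cos (θ/2)^2 / Real.sin (n * θ)^2 = a * (1 + b) / (a + b)) :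
    Real.tan (n * θ)^2 = (1 + a + b) / (a * b) ∧
      Real.tan (θ/2)^2 = b / (a * (1 + a + b)) := by
  have hab : (0:ℝ) < a + b := by linarith
  have ha1 : (0:ℝ) < a + 1 := by linarith
  have hb1 : (0:ℝ) < 1 + b := by linarith
  have habn : a + b ≠ 0 := ne_of_gt hab
  have hpyth : Real.sin (θ/2)^2 + Real.cos (θ/2)^2 = 1 := Real.sin_sq_add_cos_sq _
  have hc2 : Real.cos (θ/2)^2 = a * (1 + a + b) / ((a + b) * (a + 1)) := by
    have := hpyth
    rw [h1] at this
    field_simp at this ⊢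
    nlinarith [this]
  have hS2 : Real.sin (n * θ)^2 ≠ 0 := pow_ne_zero 2 hsin
  have hSval : Real.sin (n * θ)^2 = (1 + a + b) / ((a + 1) * (1 + b)) := by
    have h2' : Real.cos (θ/2)^2 = Real.sin (n * θ)^2 * (a * (1 + b) / (a + b)) := by
      rw [div_eq_iff hS2] at h2
      rw [h2]
      ring
    rw [hc2] at h2'
    rw [eq_div_iff (by positivity)]
    have hx : a * (a + b) ≠ 0 := by positivity
    apply mul_left_cancel₀ hx
    field_simp at h2'
    linear_combination (-(a * (a + b))) * h2'
  have hpyth2 : Real.sin (n*θ)^2 + Real.cos (n*θ)^2 = 1 := Real.sin_sq_add_cos_sq _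
  have hCval : Real.cos (n * θ)^2 = a * b / ((a + 1) * (1 + b)) := by
    rw [hSval] at hpyth2
    field_simp at hpyth2 ⊢
    nlinarith [hpyth2]
  have hC : Real.cos (n * θ) ≠ 0 := by
    intro h
    rw [h] at hCval
    simp at hCval
    have : a * b / ((a + 1) * (1 + b)) > 0 := by positivity
    rw [← hCval] at this
    simp at this
  have hc : Real.cos (θ/2) ≠ 0 := by
    intro h
    rw [h] at hc2
    simp at hc2
    have : a * (1 + a + b) / ((a + b) * (a + 1)) > 0 := by positivity
    rw [← hc2] at this
    simp at this
  constructor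
  · rw [Real.tan_eq_sin_div_cos, div_pow, hSval, hCval]
    have h1ab : (0:ℝ) < 1 + a + b := by linarith
    field_simp
  · rw [Real.tan_eq_sin_div_cos, div_pow, h1, hc2]
    field_simp
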